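/- Let F : ℝ^(N×n) → ℝ be Lipschitz, μ a probability measure on ℝ^(N×n) with finite first moment and barycenter b(μ), σ a finite positive measure on the unit sphere of ℝ^(N×n), and t > 0. Suppose that for every ε > 0 and every ξ where F is differentiable one has (F(ξ + ε b(μ) + ε t z̄) - F(ξ))/ε ≤ ∫ (F(ξ + ε w) - F(ξ))/ε dμ(w) + t ∫ F^∞ dσ where z̄ is the barycenter of σ and F^∞ exists. Then ⟨F'(ξ), z̄⟩ ≤ ∫ F^∞ dσ for every differentiability point ξ, and consequently cd_F(z̄) ≤ ∫ F^∞ dσ. -/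

import Mathlib

open MeasureTheory Filter
open scoped RealInnerProductSpace

lemma slope_tendsto_aux {E : Type*} [NormedAddCommGroup E] [NormedSpace ℝ E]
    {F : E → ℝ} {ξ : E} (hξ : DifferentiableAt ℝ F ξ) (v : E) :
    Tendsto (fun ε : ℝ => (F (ξ + ε • v) - F ξ) / ε) (nhdsWithin 0 (Set.Ioi 0))
      (nhds (fderiv ℝ F ξ v)) := by
  have hline : HasDerivAt (fun ε : ℝ => ξ + ε • v) v 0 := by
    simpa using ((hasDerivAt_id (0:ℝ)).smul_const v).const_add ξ
  have hcomp : HasDerivAt (fun ε : ℝ => F (ξ + ε • v)) (fderiv ℝ F ξ v) 0 := by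
    have hfd : HasFDerivAt F (fderiv ℝ F ξ) (ξ + (0:ℝ) • v) := by
      simpa using hξ.hasFDerivAt
    exact hfd.comp_hasDerivAt 0 hline
  have := hasDerivAt_iff_tendsto_slope.1 hcomp
  have h2 : Tendsto (slope (fun ε : ℝ => F (ξ + ε • v)) 0) (nhdsWithin 0 (Set.Ioi 0))
      (nhds (fderiv ℝ F ξ v)) :=
    this.mono_left (nhdsWithin_mono _ (fun x hx => ne_of_gt hx))
  refine h2.congr (fun ε => ?_)
  simp [slope_def_field, div_eq_inv_mul]

/-- the key rearrangement step. If for all `ε > 0` and all points `ξ` of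
differentiability of `F` the rescaled Jensen inequality holds, then
`⟨F'(ξ), z̄⟩ ≤ ∫ F^∞ dσ` at every differentiability point, and hence
`cd_F(z̄) ≤ ∫ F^∞ dσ`. -/
theorem rearrangement_step (N n : ℕ) (L : NNReal)
    (F Finf : EuclideanSpace ℝ (Fin N × Fin n) → ℝ) (hF : LipschitzWith L F)
    (hrec : TendstoUniformlyOn
      (fun (t : ℝ) (z : EuclideanSpace ℝ (Fin N × Fin n)) => F (t • z) / t)
      Finf atTop (Metric.sphere 0 1))
    (μ σ : Measure (EuclideanSpace ℝ (Fin N × Fin n)))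
    (hμ : IsProbabilityMeasure μ)
    (hμmom : Integrable (fun w => w) μ)
    (hσfin : IsFiniteMeasure σ)
    (hσsph : σ (Metric.sphere (0 : EuclideanSpace ℝ (Fin N × Fin n)) 1)ᶜ = 0)
    (t : ℝ) (ht : 0 < t)
    (hineq : ∀ ε : ℝ, 0 < ε → ∀ ξ, DifferentiableAt ℝ F ξ →
      (F (ξ + ε • (∫ w, w ∂μ) + (ε * t) • (∫ w, w ∂σ)) - F ξ) / ε ≤
        (∫ w, (F (ξ + ε • w) - F ξ) / ε ∂μ) + t * ∫ w, Finf w ∂σ) :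
    (∀ ξ, DifferentiableAt ℝ F ξ →
        ⟪gradient F ξ, ∫ w, w ∂σ⟫ ≤ ∫ w, Finf w ∂σ) ∧
      sSup {y : ℝ | ∃ ξ, DifferentiableAt ℝ F ξ ∧
          y = ⟪gradient F ξ, ∫ w, w ∂σ⟫} ≤ ∫ w, Finf w ∂σ := by
  set b : EuclideanSpace ℝ (Fin N × Fin n) := ∫ w, w ∂μ with hb
  set z : EuclideanSpace ℝ (Fin N × Fin n) := ∫ w, w ∂σ with hz
  have hgrad : ∀ ξ, ∀ v, ⟪gradient F ξ, v⟫ = fderiv ℝ F ξ v := by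
    intro ξ v
    rw [gradient, InnerProductSpace.toDual_symm_apply]
  have key : ∀ ξ, DifferentiableAt ℝ F ξ → ⟪gradient F ξ, z⟫ ≤ ∫ w, Finf w ∂σ := by
    intro ξ hξ
    have hL : Tendsto (fun ε : ℝ => (F (ξ + ε • (b + t • z)) - F ξ) / ε)
        (nhdsWithin 0 (Set.Ioi 0)) (nhds (fderiv ℝ F ξ (b + t • z))) :=
      slope_tendsto_aux hξ _
    have hdom : Tendsto (fun ε : ℝ => ∫ w, (F (ξ + ε • w) - F ξ) / ε ∂μ)
        (nhdsWithin 0 (Set.Ioi 0)) (nhds (∫ w, fderiv ℝ F ξ w ∂μ)) := by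
      apply tendsto_integral_filter_of_dominated_convergence
        (fun w => (L : ℝ) * ‖w‖)
      · filter_upwards with ε
        exact ((hF.continuous.comp (continuous_const.add
          (continuous_const_smul ε))).sub continuous_const).div_const ε
          |>.aestronglyMeasurable
      · filter_upwards [self_mem_nhdsWithin] with ε (hε : 0 < ε)
        filter_upwards with w
        have h1 : |F (ξ + ε • w) - F ξ| ≤ (L : ℝ) * (ε * ‖w‖) := by
          have := hF.dist_le_mul (ξ + ε • w) ξ
          rw [Real.dist_eq] at this
          simpa [norm_smul, abs_of_pos hε] using this
        rw [Real.norm_eq_abs, abs_div, abs_of_pos hε, div_le_iff₀ hε]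
        calc |F (ξ + ε • w) - F ξ| ≤ (L : ℝ) * (ε * ‖w‖) := h1
          _ = (L : ℝ) * ‖w‖ * ε := by ring
      · exact (hμmom.norm).const_mul _
      · filter_upwards with w
        exact slope_tendsto_aux hξ w
    have hint : ∫ w, fderiv ℝ F ξ w ∂μ = fderiv ℝ F ξ b := by
      simpa using (fderiv ℝ F ξ).integral_comp_comm hμmom
    have hle : fderiv ℝ F ξ (b + t • z) ≤ (∫ w, fderiv ℝ F ξ w ∂μ) + t * ∫ w, Finf w ∂σ := by
      refine le_of_tendsto_of_tendsto hL (hdom.add_const (t * ∫ w, Finf w ∂σ)) ?_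
      filter_upwards [self_mem_nhdsWithin] with ε (hε : 0 < ε)
      have := hineq ε hε ξ hξ
      have hrw : ξ + ε • b + (ε * t) • z = ξ + ε • (b + t • z) := by
        rw [smul_add, smul_smul, add_assoc]
      rw [hrw] at this
      exact this
    rw [hint, map_add, _root_.map_smul, smul_eq_mul, add_le_add_iff_left] at hle
    rw [hgrad]
    exact le_of_mul_le_mul_left hle ht
  refine ⟨key, ?_⟩
  obtain ⟨ξ₀, hξ₀⟩ : ∃ ξ, DifferentiableAt ℝ F ξ := by
    have := hF.ae_differentiableAt (μ := volume)
    exact this.exists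
  refine csSup_le ⟨_, ξ₀, hξ₀, rfl⟩ ?_
  rintro y ⟨ξ, hξ, rfl⟩
  exact key ξ hξ
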